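/- For every k ≥ 7 and every vertex q of KB(C_k), the graph KB(C_k) − {q} obtained by deleting q is not a biclique graph; that is, there is no finite simple graph H' such that KB(H') is isomorphic to KB(C_k) − {q}. -/

import Mathlib

open SimpleGraph

variable {V : Type}

/-- `B1`, `B2` are the two (nonempty) parts of an induced complete bipartite subgraph:
they are disjoint, each part is independent, and all edges between the parts are present. -/
def IsCBP (H : SimpleGraph V) (B1 B2 : Set V) : Prop :=
  B1.Nonempty ∧ B2.Nonempty ∧ Disjoint B1 B2 ∧
    (∀ a ∈ B1, ∀ b ∈ B1, ¬H.Adj a b) ∧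
    (∀ a ∈ B2, ∀ b ∈ B2, ¬H.Adj a b) ∧
    (∀ a ∈ B1, ∀ b ∈ B2, H.Adj a b)

/-- A set of vertices inducing a complete bipartite subgraph `K_{m,n}`, `m, n ≥ 1`. -/
def IsCompleteBipartiteSet (H : SimpleGraph V) (S : Set V) : Prop :=
  ∃ B1 B2 : Set V, IsCBP H B1 B2 ∧ B1 ∪ B2 = S

/-- A biclique: a maximal set of vertices inducing a complete bipartite subgraph. -/
def IsBiclique (H : SimpleGraph V) (S : Set V) : Prop :=
  IsCompleteBipartiteSet H S ∧
    ∀ T : Set V, IsCompleteBipartiteSet H T → S ⊆ T → S = T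

/-- The biclique graph `KB(H)`: the intersection graph of the bicliques of `H`. -/
def KB (H : SimpleGraph V) : SimpleGraph {S : Set V // IsBiclique H S} :=
  SimpleGraph.fromRel fun A B => (A.1 ∩ B.1).Nonempty

/-- The cycle `C_k` on vertex set `ZMod k`, `i` adjacent to `j` iff `i - j ≡ ±1 (mod k)`. -/
def cycle (k : ℕ) : SimpleGraph (ZMod k) :=
  SimpleGraph.fromRel fun i j => i = j + 1

lemma IsCBP.symm {H : SimpleGraph V} {B1 B2 : Set V} (h : IsCBP H B1 B2) : IsCBP H B2 B1 :=
  ⟨h.2.1, h.1, h.2.2.1.symm, h.2.2.2.2.1, h.2.2.2.1,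
    fun a ha b hb => (h.2.2.2.2.2 b hb a ha).symm⟩

lemma exists_biclique_superset [Finite V] {H : SimpleGraph V} {S1 S2 : Set V}
    (h : IsCBP H S1 S2) : ∃ T, IsBiclique H T ∧ S1 ∪ S2 ⊆ T := by
  classical
  set 𝒮 : Set (Set V) := {T | IsCompleteBipartiteSet H T ∧ S1 ∪ S2 ⊆ T} with h𝒮
  have hfin : 𝒮.Finite := Set.toFinite _
  have hne : 𝒮.Nonempty := ⟨S1 ∪ S2, ⟨S1, S2, h, rfl⟩, subset_rfl⟩
  obtain ⟨T, hT, hmax⟩ : ∃ T ∈ 𝒮, ∀ T' ∈ 𝒮, T.ncard ≤ T'.ncard → T.ncard = T'.ncard := by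
    obtain ⟨T, hT, hmax⟩ := Set.Finite.exists_maximalFor Set.ncard 𝒮 hfin hne
    exact ⟨T, hT, fun T' hT' hle => le_antisymm hle (hmax hT' hle)⟩
  refine ⟨T, ⟨hT.1, fun T' hT' hsub => ?_⟩, hT.2⟩
  have hT'mem : T' ∈ 𝒮 := ⟨hT', hT.2.trans hsub⟩
  have hle : T.ncard ≤ T'.ncard := Set.ncard_le_ncard hsub (Set.toFinite _)
  exact Set.eq_of_subset_of_ncard_le hsub (le_of_eq (hmax T' hT'mem hle).symm) (Set.toFinite _)

lemma extend_edge [Finite V] {H : SimpleGraph V} {u v : V} (h : H.Adj u v) :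
    ∃ D, IsBiclique H D ∧ u ∈ D ∧ v ∈ D := by
  have hcbp : IsCBP H {u} {v} := by
    refine ⟨⟨u, rfl⟩, ⟨v, rfl⟩, ?_, ?_, ?_, ?_⟩
    · simpa using h.ne
    · rintro a rfl b rfl; exact fun had => H.irrefl had
    · rintro a rfl b rfl; exact fun had => H.irrefl had
    · rintro a rfl b rfl; exact h
  obtain ⟨T, hT, hsub⟩ := exists_biclique_superset hcbp
  exact ⟨T, hT, hsub (Or.inl rfl), hsub (Or.inr rfl)⟩

lemma star_core [Finite V] {H : SimpleGraph V} {B C B1 B2 C1 C2 : Set V} {x y a : V}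
    (hB : IsCBP H B1 B2) (hBu : B1 ∪ B2 = B)
    (hC : IsCBP H C1 C2) (hCu : C1 ∪ C2 = C)
    (hCmax : ∀ T, IsCompleteBipartiteSet H T → C ⊆ T → C = T)
    (hne : B ≠ C)
    (hyB : y ∈ B1) (hyC : y ∈ C1)
    (hxB : x ∈ B) (hxC : x ∉ C)
    (hax : H.Adj a x) (haC : a ∉ C)
    (hcon : ∀ D, IsBiclique H D → (D ∩ B).Nonempty → (D ∩ C).Nonempty → D = B ∨ D = C) :
    False := by
  have hB1ne := hB.1
  have hB2ne := hB.2.1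
  have hBdisj := hB.2.2.1
  have hB1ind := hB.2.2.2.1
  have hB2ind := hB.2.2.2.2.1
  have hBcross := hB.2.2.2.2.2
  have hC1ne := hC.1
  have hC2ne := hC.2.1
  have hCdisj := hC.2.2.1
  have hC1ind := hC.2.2.2.1
  have hC2ind := hC.2.2.2.2.1
  have hCcross := hC.2.2.2.2.2
  have mB1 : B1 ⊆ B := by rw [← hBu]; exact Set.subset_union_left
  have mB2 : B2 ⊆ B := by rw [← hBu]; exact Set.subset_union_right
  have mC1 : C1 ⊆ C := by rw [← hCu]; exact Set.subset_union_left
  have mC2 : C2 ⊆ C := by rw [← hCu]; exact Set.subset_union_right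
  have hdB : ∀ {v : V}, v ∈ B1 → v ∈ B2 → False :=
    fun h1 h2 => (hBdisj.ne_of_mem h1 h2) rfl
  have hdC : ∀ {v : V}, v ∈ C1 → v ∈ C2 → False :=
    fun h1 h2 => (hCdisj.ne_of_mem h1 h2) rfl
  have hyCC : y ∈ C := mC1 hyC
  have hyBB : y ∈ B := mB1 hyB
  have hEdge : ∀ u v : V, H.Adj u v → u ∈ B → v ∈ C → v ∈ B ∨ u ∈ C := by
    intro u v hadj huB hvC
    obtain ⟨D, hD, huD, hvD⟩ := extend_edge hadj
    rcases hcon D hD ⟨u, huD, huB⟩ ⟨v, hvD, hvC⟩ with hDB | hDC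
    · exact Or.inl (hDB ▸ hvD)
    · exact Or.inr (hDC ▸ huD)
  have hB2C : ∀ v ∈ B2, v ∈ C → v ∈ C2 := by
    intro v hv hvC
    have hadj : H.Adj y v := hBcross y hyB v hv
    rw [← hCu] at hvC
    rcases hvC with h1 | h2
    · exact absurd hadj (hC1ind y hyC v h1)
    · exact h2
  have hB1C : ∀ v ∈ B1, v ∈ C → v ∈ C1 := by
    intro v hv hvC
    rw [← hCu] at hvC
    rcases hvC with h1 | h2
    · exact h1
    · exact absurd (hCcross y hyC v h2) (hB1ind y hyB v hv)
  have hC2B : ∀ v ∈ C2, v ∈ B → v ∈ B2 := by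
    intro v hv hvB
    have hadj : H.Adj y v := hCcross y hyC v hv
    rw [← hBu] at hvB
    rcases hvB with h1 | h2
    · exact absurd hadj (hB1ind y hyB v h1)
    · exact h2
  have hC1B : ∀ v ∈ C1, v ∈ B → v ∈ B1 := by
    intro v hv hvB
    rw [← hBu] at hvB
    rcases hvB with h1 | h2
    · exact h1
    · exact absurd (hBcross y hyB v h2) (hC1ind y hyC v hv)
  rw [← hBu] at hxB
  rcases hxB with hxB1 | hxB2
  · -- Case I : x ∈ B1
    have hxBB : x ∈ B := mB1 hxB1
    have hxC1 : ∀ v ∈ C1, ¬H.Adj x v := by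
      intro v hv hadj
      rcases hEdge x v hadj hxBB (mC1 hv) with hvB | hxC'
      · exact hB1ind x hxB1 v (hC1B v hv hvB) hadj
      · exact hxC hxC'
    by_cases hall : ∀ v ∈ C2, H.Adj x v
    · have hcbp : IsCBP H ({x} ∪ C1) C2 := by
        refine ⟨⟨x, Or.inl rfl⟩, hC2ne, ?_, ?_, hC2ind, ?_⟩
        · rw [Set.disjoint_union_left]
          constructor
          · rw [Set.disjoint_singleton_left]
            exact fun h => hxC (mC2 h)
          · exact hCdisj
        · rintro u (rfl | hu) v (rfl | hv) had
          · exact H.irrefl had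
          · exact hxC1 v hv had
          · exact hxC1 u hu had.symm
          · exact hC1ind u hu v hv had
        · rintro u (rfl | hu) v hv
          · exact hall v hv
          · exact hCcross u hu v hv
      obtain ⟨D, hD, hsub⟩ := exists_biclique_superset hcbp
      have hxD : x ∈ D := hsub (Or.inl (Or.inl rfl))
      rcases hcon D hD ⟨x, hxD, hxBB⟩ ⟨y, hsub (Or.inl (Or.inr hyC)), hyCC⟩ with hDB | hDC
      · have hCB : C ⊆ B := by
          intro u hu
          rw [← hCu] at hu
          rcases hu with h1 | h2
          · exact hDB ▸ hsub (Or.inl (Or.inr h1))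
          · exact hDB ▸ hsub (Or.inr h2)
        exact hne (hCmax B ⟨B1, B2, hB, hBu⟩ hCB).symm
      · exact hxC (hDC ▸ hxD)
    · push_neg at hall
      obtain ⟨c, hcC2, hcx⟩ := hall
      have hcC : c ∈ C := mC2 hcC2
      have hcB : c ∉ B := by
        intro h
        exact hcx (hBcross x hxB1 c (hC2B c hcC2 h))
      have hcP : ∀ u, u ∈ B → H.Adj c u → u ∈ B1 ∩ C1 := by
        intro u huB hadj
        rcases hEdge u c hadj.symm huB hcC with hcB' | huC
        · exact absurd hcB' hcB
        · have huC1 : u ∈ C1 := by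
            rw [← hCu] at huC
            rcases huC with h1 | h2
            · exact h1
            · exact absurd hadj (hC2ind c hcC2 u h2)
          exact ⟨hC1B u huC1 huB, huC1⟩
      have hcbp : IsCBP H ({c} ∪ B2) (B1 ∩ C1) := by
        refine ⟨⟨c, Or.inl rfl⟩, ⟨y, hyB, hyC⟩, ?_, ?_, ?_, ?_⟩
        · rw [Set.disjoint_union_left]
          constructor
          · rw [Set.disjoint_singleton_left]
            exact fun h => hdC h.2 hcC2
          · exact (hBdisj.symm.mono_right Set.inter_subset_left)
        · rintro u (rfl | hu) v (rfl | hv) had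
          · exact H.irrefl had
          · exact hdB (hcP v (mB2 hv) had).1 hv
          · exact hdB (hcP u (mB2 hu) had.symm).1 hu
          · exact hB2ind u hu v hv had
        · intro u hu v hv
          exact hB1ind u hu.1 v hv.1
        · rintro u (rfl | hu) v hv
          · exact (hCcross v hv.2 u hcC2).symm
          · exact (hBcross v hv.1 u hu).symm
      obtain ⟨D, hD, hsub⟩ := exists_biclique_superset hcbp
      obtain ⟨b0, hb0⟩ := hB2ne
      have hcD : c ∈ D := hsub (Or.inl (Or.inl rfl))
      rcases hcon D hD ⟨b0, hsub (Or.inl (Or.inr hb0)), mB2 hb0⟩ ⟨c, hcD, hcC⟩ with hDB | hDC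
      · exact hcB (hDB ▸ hcD)
      · have hB2C2 : ∀ b ∈ B2, b ∈ C2 :=
          fun b hb => hB2C b hb (hDC ▸ hsub (Or.inl (Or.inr hb)))
        have haB : a ∉ B := by
          intro h
          rw [← hBu] at h
          rcases h with h1 | h2
          · exact hB1ind a h1 x hxB1 hax
          · exact haC (mC2 (hB2C2 a h2))
        have haB2 : ∀ b ∈ B2, ¬H.Adj a b := by
          intro b hb hadj
          obtain ⟨D', hD', haD', hbD'⟩ := extend_edge hadj
          rcases hcon D' hD' ⟨b, hbD', mB2 hb⟩ ⟨b, hbD', mC2 (hB2C2 b hb)⟩ with h | h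
          · exact haB (h ▸ haD')
          · exact haC (h ▸ haD')
        have hcbp2 : IsCBP H {x} ({a} ∪ B2) := by
          refine ⟨⟨x, rfl⟩, ⟨a, Or.inl rfl⟩, ?_, ?_, ?_, ?_⟩
          · rw [Set.disjoint_union_right]
            constructor
            · rw [Set.disjoint_singleton_right]
              exact fun h => hax.ne (Set.mem_singleton_iff.mp h)
            · rw [Set.disjoint_left]
              rintro u rfl
              exact fun h => hdB hxB1 h
          · rintro u rfl v rfl had
            exact H.irrefl had
          · rintro u (rfl | hu) v (rfl | hv) had
            · exact H.irrefl had
            · exact haB2 v hv had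
            · exact haB2 u hu had.symm
            · exact hB2ind u hu v hv had
          · rintro u rfl v (rfl | hv)
            · exact hax.symm
            · exact hBcross u hxB1 v hv
        obtain ⟨D', hD', hsub'⟩ := exists_biclique_superset hcbp2
        rcases hcon D' hD' ⟨x, hsub' (Or.inl rfl), hxBB⟩
            ⟨b0, hsub' (Or.inr (Or.inr hb0)), mC2 (hB2C2 b0 hb0)⟩ with h | h
        · exact haB (h ▸ hsub' (Or.inr (Or.inl rfl)))
        · exact hxC (h ▸ hsub' (Or.inl rfl))
  · -- Case II : x ∈ B2
    have hxBB : x ∈ B := mB2 hxB2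
    have hxC2 : ∀ v ∈ C2, ¬H.Adj x v := by
      intro v hv hadj
      rcases hEdge x v hadj hxBB (mC2 hv) with hvB | hxC'
      · exact hB2ind x hxB2 v (hC2B v hv hvB) hadj
      · exact hxC hxC'
    by_cases hall : ∀ v ∈ C1, H.Adj x v
    · have hcbp : IsCBP H C1 (C2 ∪ {x}) := by
        refine ⟨hC1ne, ⟨x, Or.inr rfl⟩, ?_, hC1ind, ?_, ?_⟩
        · rw [Set.disjoint_union_right]
          constructor
          · exact hCdisj
          · rw [Set.disjoint_singleton_right]
            exact fun h => hxC (mC1 h)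
        · rintro u (hu | rfl) v (hv | rfl) had
          · exact hC2ind u hu v hv had
          · exact hxC2 u hu had.symm
          · exact hxC2 v hv had
          · exact H.irrefl had
        · rintro u hu v (hv | rfl)
          · exact hCcross u hu v hv
          · exact (hall u hu).symm
      obtain ⟨D, hD, hsub⟩ := exists_biclique_superset hcbp
      have hxD : x ∈ D := hsub (Or.inr (Or.inr rfl))
      rcases hcon D hD ⟨x, hxD, hxBB⟩ ⟨y, hsub (Or.inl hyC), hyCC⟩ with hDB | hDC
      · have hCB : C ⊆ B := by
          intro u hu
          rw [← hCu] at hu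
          rcases hu with h1 | h2
          · exact hDB ▸ hsub (Or.inl h1)
          · exact hDB ▸ hsub (Or.inr (Or.inl h2))
        exact hne (hCmax B ⟨B1, B2, hB, hBu⟩ hCB).symm
      · exact hxC (hDC ▸ hxD)
    · push_neg at hall
      obtain ⟨c, hcC1, hcx⟩ := hall
      have hcC : c ∈ C := mC1 hcC1
      have hcB : c ∉ B := by
        intro h
        rw [← hBu] at h
        rcases h with h1 | h2
        · exact hcx ((hBcross c h1 x hxB2).symm)
        · exact hC1ind y hyC c hcC1 (hBcross y hyB c h2)
      have hcQ : ∀ u, u ∈ B → H.Adj c u → u ∈ B2 ∩ C2 := by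
        intro u huB hadj
        rcases hEdge u c hadj.symm huB hcC with hcB' | huC
        · exact absurd hcB' hcB
        · have huC2 : u ∈ C2 := by
            rw [← hCu] at huC
            rcases huC with h1 | h2
            · exact absurd hadj (hC1ind c hcC1 u h1)
            · exact h2
          exact ⟨hC2B u huC2 huB, huC2⟩
      by_cases hQ : (B2 ∩ C2).Nonempty
      · obtain ⟨q0, hq0⟩ := hQ
        have hcbp : IsCBP H ({c} ∪ B1) (B2 ∩ C2) := by
          refine ⟨⟨c, Or.inl rfl⟩, ⟨q0, hq0⟩, ?_, ?_, ?_, ?_⟩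
          · rw [Set.disjoint_union_left]
            constructor
            · rw [Set.disjoint_singleton_left]
              exact fun h => hdC hcC1 h.2
            · exact (hBdisj.mono_right Set.inter_subset_left)
          · rintro u (rfl | hu) v (rfl | hv) had
            · exact H.irrefl had
            · exact hdB hv (hcQ v (mB1 hv) had).1
            · exact hdB hu (hcQ u (mB1 hu) had.symm).1
            · exact hB1ind u hu v hv had
          · intro u hu v hv
            exact hB2ind u hu.1 v hv.1
          · rintro u (rfl | hu) v hv
            · exact hCcross u hcC1 v hv.2
            · exact hBcross u hu v hv.1
        obtain ⟨D, hD, hsub⟩ := exists_biclique_superset hcbp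
        have hcD : c ∈ D := hsub (Or.inl (Or.inl rfl))
        rcases hcon D hD ⟨q0, hsub (Or.inr hq0), mB2 hq0.1⟩ ⟨c, hcD, hcC⟩ with hDB | hDC
        · exact hcB (hDB ▸ hcD)
        · have hB1C1 : ∀ b ∈ B1, b ∈ C1 :=
            fun b hb => hB1C b hb (hDC ▸ hsub (Or.inl (Or.inr hb)))
          have haB : a ∉ B := by
            intro h
            rw [← hBu] at h
            rcases h with h1 | h2
            · exact haC (mC1 (hB1C1 a h1))
            · exact hB2ind a h2 x hxB2 hax
          have haB1 : ∀ b ∈ B1, ¬H.Adj a b := by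
            intro b hb hadj
            obtain ⟨D', hD', haD', hbD'⟩ := extend_edge hadj
            rcases hcon D' hD' ⟨b, hbD', mB1 hb⟩ ⟨b, hbD', mC1 (hB1C1 b hb)⟩ with h | h
            · exact haB (h ▸ haD')
            · exact haC (h ▸ haD')
          have hcbp2 : IsCBP H {x} ({a} ∪ B1) := by
            refine ⟨⟨x, rfl⟩, ⟨a, Or.inl rfl⟩, ?_, ?_, ?_, ?_⟩
            · rw [Set.disjoint_union_right]
              constructor
              · rw [Set.disjoint_singleton_right]
                exact fun h => hax.ne (Set.mem_singleton_iff.mp h)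
              · rw [Set.disjoint_left]
                rintro u rfl
                exact fun h => hdB h hxB2
            · rintro u rfl v rfl had
              exact H.irrefl had
            · rintro u (rfl | hu) v (rfl | hv) had
              · exact H.irrefl had
              · exact haB1 v hv had
              · exact haB1 u hu had.symm
              · exact hB1ind u hu v hv had
            · rintro u rfl v (rfl | hv)
              · exact hax.symm
              · exact (hBcross v hv u hxB2).symm
          obtain ⟨D', hD', hsub'⟩ := exists_biclique_superset hcbp2
          obtain ⟨b1, hb1⟩ := hB1ne
          rcases hcon D' hD' ⟨x, hsub' (Or.inl rfl), hxBB⟩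
              ⟨b1, hsub' (Or.inr (Or.inr hb1)), mC1 (hB1C1 b1 hb1)⟩ with h | h
          · exact haB (h ▸ hsub' (Or.inr (Or.inl rfl)))
          · exact hxC (h ▸ hsub' (Or.inl rfl))
      · have hC2nB : ∀ v ∈ C2, v ∉ B := by
          intro v hv h
          exact hQ ⟨v, hC2B v hv h, hv⟩
        have hB2nC : ∀ v ∈ B2, v ∉ C := by
          intro v hv h
          exact hQ ⟨v, hv, hB2C v hv h⟩
        have hcbp : IsCBP H (B1 ∩ C1) (B2 ∪ C2) := by
          obtain ⟨b0, hb0⟩ := hB2ne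
          refine ⟨⟨y, hyB, hyC⟩, ⟨b0, Or.inl hb0⟩, ?_, ?_, ?_, ?_⟩
          · rw [Set.disjoint_union_right]
            constructor
            · exact (hBdisj.mono_left Set.inter_subset_left)
            · exact (hCdisj.mono_left Set.inter_subset_right)
          · intro u hu v hv
            exact hB1ind u hu.1 v hv.1
          · rintro u (hu | hu) v (hv | hv) had
            · exact hB2ind u hu v hv had
            · rcases hEdge u v had (mB2 hu) (mC2 hv) with h | h
              · exact hC2nB v hv h
              · exact hB2nC u hu h
            · rcases hEdge v u had.symm (mB2 hv) (mC2 hu) with h | h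
              · exact hC2nB u hu h
              · exact hB2nC v hv h
            · exact hC2ind u hu v hv had
          · rintro u hu v (hv | hv)
            · exact hBcross u hu.1 v hv
            · exact hCcross u hu.2 v hv
        obtain ⟨D, hD, hsub⟩ := exists_biclique_superset hcbp
        obtain ⟨b0, hb0⟩ := hB2ne
        obtain ⟨v0, hv0⟩ := hC2ne
        rcases hcon D hD ⟨b0, hsub (Or.inr (Or.inl hb0)), mB2 hb0⟩
            ⟨v0, hsub (Or.inr (Or.inr hv0)), mC2 hv0⟩ with h | h
        · exact hC2nB v0 hv0 (h ▸ hsub (Or.inr (Or.inr hv0)))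
        · exact hB2nC b0 hb0 (h ▸ hsub (Or.inr (Or.inl hb0)))

lemma star_aux [Finite V] {H : SimpleGraph V} {B C : Set V} {x y a : V}
    (hB : IsBiclique H B) (hC : IsBiclique H C) (hne : B ≠ C)
    (hyB : y ∈ B) (hyC : y ∈ C) (hxB : x ∈ B) (hxC : x ∉ C)
    (hax : H.Adj a x) (haC : a ∉ C)
    (hcon : ∀ D, IsBiclique H D → (D ∩ B).Nonempty → (D ∩ C).Nonempty → D = B ∨ D = C) :
    False := by
  obtain ⟨⟨B1, B2, hBcbp, hBu⟩, hBmax⟩ := hB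
  obtain ⟨⟨C1, C2, hCcbp, hCu⟩, hCmax⟩ := hC
  have hCu' : C2 ∪ C1 = C := by rw [Set.union_comm]; exact hCu
  have hBu' : B2 ∪ B1 = B := by rw [Set.union_comm]; exact hBu
  have hyB' := hyB
  have hyC' := hyC
  rw [← hBu] at hyB'
  rw [← hCu] at hyC'
  rcases hyB' with h1 | h1 <;> rcases hyC' with h2 | h2
  · exact star_core hBcbp hBu hCcbp hCu hCmax hne h1 h2 hxB hxC hax haC hcon
  · exact star_core hBcbp hBu hCcbp.symm hCu' hCmax hne h1 h2 hxB hxC hax haC hcon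
  · exact star_core hBcbp.symm hBu' hCcbp hCu hCmax hne h1 h2 hxB hxC hax haC hcon
  · exact star_core hBcbp.symm hBu' hCcbp.symm hCu' hCmax hne h1 h2 hxB hxC hax haC hcon

section Cycle
variable {k : ℕ}

def nbhd (i : ZMod k) : Set (ZMod k) := {i - 1, i, i + 1}

lemma zc (hk : 7 ≤ k) {n : ℕ} (h1 : 0 < n) (h2 : n < 7) : (n : ZMod k) ≠ 0 := by
  intro h
  haveI : NeZero k := ⟨by omega⟩
  rw [ZMod.natCast_eq_zero_iff] at h
  exact absurd (Nat.le_of_dvd h1 h) (by omega)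

lemma zc1 (hk : 7 ≤ k) : (1 : ZMod k) ≠ 0 := by
  have := zc hk (n := 1) (by norm_num) (by norm_num); exact_mod_cast this
lemma zc2 (hk : 7 ≤ k) : (2 : ZMod k) ≠ 0 := by
  have := zc hk (n := 2) (by norm_num) (by norm_num); exact_mod_cast this
lemma zc3 (hk : 7 ≤ k) : (3 : ZMod k) ≠ 0 := by
  have := zc hk (n := 3) (by norm_num) (by norm_num); exact_mod_cast this
lemma zc4 (hk : 7 ≤ k) : (4 : ZMod k) ≠ 0 := by
  have := zc hk (n := 4) (by norm_num) (by norm_num); exact_mod_cast this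
lemma zc5 (hk : 7 ≤ k) : (5 : ZMod k) ≠ 0 := by
  have := zc hk (n := 5) (by norm_num) (by norm_num); exact_mod_cast this
lemma zc6 (hk : 7 ≤ k) : (6 : ZMod k) ≠ 0 := by
  have := zc hk (n := 6) (by norm_num) (by norm_num); exact_mod_cast this

lemma cycle_adj (hk : 7 ≤ k) {u v : ZMod k} :
    (cycle k).Adj u v ↔ v = u + 1 ∨ v = u - 1 := by
  rw [cycle, SimpleGraph.fromRel_adj]
  constructor
  · rintro ⟨hne, h | h⟩
    · right; rw [h]; ring
    · left; exact h
  · rintro (rfl | rfl)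
    · exact ⟨fun h => zc1 hk (by linear_combination -h), Or.inr rfl⟩
    · exact ⟨fun h => zc1 hk (by linear_combination h), Or.inl (by ring)⟩

lemma mem_nbhd {i u : ZMod k} : u ∈ nbhd i ↔ u = i - 1 ∨ u = i ∨ u = i + 1 := by
  simp [nbhd]


lemma not_adj_self2 (hk : 7 ≤ k) {u v : ZMod k}
    (huv : v = u ∨ v = u + 2 ∨ u = v + 2) : ¬ (cycle k).Adj u v := by
  rw [cycle_adj hk]
  rintro (h | h) <;> rcases huv with h' | h' | h'
  · exact zc1 hk (by linear_combination h' - h)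
  · exact zc1 hk (by linear_combination h - h')
  · exact zc3 hk (by linear_combination -h - h')
  · exact zc1 hk (by linear_combination h - h')
  · exact zc3 hk (by linear_combination h - h')
  · exact zc1 hk (by linear_combination -h - h')

lemma adj_succ (hk : 7 ≤ k) {u v : ZMod k} (h : v = u + 1 ∨ v = u - 1) :
    (cycle k).Adj u v := (cycle_adj hk).mpr h


lemma nbhd_cbp (hk : 7 ≤ k) (i : ZMod k) : IsCBP (cycle k) {i - 1, i + 1} {i} := by
  refine ⟨⟨i - 1, Or.inl rfl⟩, ⟨i, rfl⟩, ?_, ?_, ?_, ?_⟩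
  · rw [Set.disjoint_singleton_right, Set.mem_insert_iff, Set.mem_singleton_iff]
    rintro (h | h)
    · exact zc1 hk (by linear_combination h)
    · exact zc1 hk (by linear_combination -h)
  · intro p hp q hq
    rw [Set.mem_insert_iff, Set.mem_singleton_iff] at hp hq
    apply not_adj_self2 hk
    rcases hp with rfl | rfl <;> rcases hq with rfl | rfl
    · exact Or.inl rfl
    · exact Or.inr (Or.inl (by ring))
    · exact Or.inr (Or.inr (by ring))
    · exact Or.inl rfl
  · intro p hp q hq
    rw [Set.mem_singleton_iff] at hp hq
    rw [hp, hq]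
    exact not_adj_self2 hk (Or.inl rfl)
  · intro p hp q hq
    rw [Set.mem_singleton_iff] at hq
    rw [Set.mem_insert_iff, Set.mem_singleton_iff] at hp
    rw [hq]
    apply adj_succ hk
    rcases hp with rfl | rfl
    · left; ring
    · right; ring

lemma nbhd_union (i : ZMod k) : ({i - 1, i + 1} : Set (ZMod k)) ∪ {i} = nbhd i := by
  ext u; simp [nbhd]; tauto

lemma nbhd_max_aux (hk : 7 ≤ k) {i : ZMod k} {T1 T2 : Set (ZMod k)}
    (hT1 : ∀ a ∈ T1, ∀ b ∈ T1, ¬(cycle k).Adj a b)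
    (hcr : ∀ a ∈ T1, ∀ b ∈ T2, (cycle k).Adj a b)
    (hiT1 : i ∈ T1)
    (him : i - 1 ∈ T1 ∪ T2) (hip : i + 1 ∈ T1 ∪ T2) :
    T1 ∪ T2 ⊆ nbhd i := by
  have him2 : i - 1 ∈ T2 := by
    rcases him with h | h
    · exact absurd (adj_succ hk (Or.inr rfl)) (hT1 i hiT1 (i - 1) h)
    · exact h
  have hip2 : i + 1 ∈ T2 := by
    rcases hip with h | h
    · exact absurd (adj_succ hk (Or.inl rfl)) (hT1 i hiT1 (i + 1) h)
    · exact h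
  rintro t (ht | ht)
  · have h1 := (cycle_adj hk).mp (hcr t ht _ him2)
    have h2 := (cycle_adj hk).mp (hcr t ht _ hip2)
    rw [mem_nbhd]
    rcases h1 with h1 | h1 <;> rcases h2 with h2 | h2
    · exact absurd (by linear_combination h2 - h1) (zc2 hk)
    · exact absurd (by linear_combination h2 - h1) (zc4 hk)
    · exact Or.inr (Or.inl (by linear_combination -h1))
    · exact absurd (by linear_combination h2 - h1) (zc2 hk)
  · have h1 := (cycle_adj hk).mp (hcr i hiT1 t ht)
    rw [mem_nbhd]
    rcases h1 with h1 | h1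
    · exact Or.inr (Or.inr h1)
    · exact Or.inl h1

lemma nbhd_cbs (hk : 7 ≤ k) (i : ZMod k) : IsCompleteBipartiteSet (cycle k) (nbhd i) :=
  ⟨_, _, nbhd_cbp hk i, nbhd_union i⟩

lemma nbhd_biclique (hk : 7 ≤ k) (i : ZMod k) : IsBiclique (cycle k) (nbhd i) := by
  refine ⟨nbhd_cbs hk i, ?_⟩
  intro T hT hsub
  obtain ⟨T1, T2, hcbp, hTu⟩ := hT
  have hi : i ∈ T1 ∪ T2 := by rw [hTu]; exact hsub (mem_nbhd.mpr (Or.inr (Or.inl rfl)))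
  have him : i - 1 ∈ T1 ∪ T2 := by rw [hTu]; exact hsub (mem_nbhd.mpr (Or.inl rfl))
  have hip : i + 1 ∈ T1 ∪ T2 := by rw [hTu]; exact hsub (mem_nbhd.mpr (Or.inr (Or.inr rfl)))
  have hT1 := hcbp.2.2.2.1
  have hT2 := hcbp.2.2.2.2.1
  have hcr := hcbp.2.2.2.2.2
  have hcr' : ∀ a ∈ T2, ∀ b ∈ T1, (cycle k).Adj a b := fun p hp q hq => (hcr q hq p hp).symm
  have hsub2 : T ⊆ nbhd i := by
    rw [← hTu]
    rcases hi with h | h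
    · exact nbhd_max_aux hk hT1 hcr h him hip
    · have him' : i - 1 ∈ T2 ∪ T1 := by rw [Set.union_comm]; exact him
      have hip' : i + 1 ∈ T2 ∪ T1 := by rw [Set.union_comm]; exact hip
      have := nbhd_max_aux hk hT2 hcr' h him' hip'
      rw [Set.union_comm] at this
      exact this
  exact subset_antisymm hsub hsub2

lemma two_in_part (hk : 7 ≤ k) {B1 B2 : Set (ZMod k)}
    (hcr : ∀ a ∈ B1, ∀ b ∈ B2, (cycle k).Adj a b) (hB2ne : B2.Nonempty)
    {a a' : ZMod k} (ha : a ∈ B1) (ha' : a' ∈ B1) (hne : a ≠ a') :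
    ∃ i, B1 ∪ B2 = nbhd i := by
  obtain ⟨b0, hb0⟩ := hB2ne
  refine ⟨b0, ?_⟩
  have h1 : ∀ v ∈ B1, b0 = v + 1 ∨ b0 = v - 1 := fun v hv => (cycle_adj hk).mp (hcr v hv b0 hb0)
  have hcase : (a = b0 - 1 ∧ a' = b0 + 1) ∨ (a = b0 + 1 ∧ a' = b0 - 1) := by
    rcases h1 a ha with h | h <;> rcases h1 a' ha' with h' | h'
    · exact absurd (by linear_combination h' - h : a = a') hne
    · exact Or.inl ⟨by linear_combination -h, by linear_combination -h'⟩
    · exact Or.inr ⟨by linear_combination -h, by linear_combination -h'⟩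
    · exact absurd (by linear_combination h' - h : a = a') hne
  ext u
  constructor
  · rintro (hu | hu)
    · rcases h1 u hu with h | h
      · exact mem_nbhd.mpr (Or.inl (by linear_combination -h))
      · exact mem_nbhd.mpr (Or.inr (Or.inr (by linear_combination -h)))
    · have h2 := (cycle_adj hk).mp (hcr a ha u hu)
      have h3 := (cycle_adj hk).mp (hcr a' ha' u hu)
      refine mem_nbhd.mpr (Or.inr (Or.inl ?_))
      rcases hcase with ⟨e1, e2⟩ | ⟨e1, e2⟩ <;> rcases h2 with h2 | h2 <;> rcases h3 with h3 | h3
      · exact absurd (by linear_combination h2 - h3 + e1 - e2 : (2:ZMod k) = 0) (zc2 hk)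
      · linear_combination h2 + e1
      · exact absurd (by linear_combination h2 - h3 + e1 - e2 : (4:ZMod k) = 0) (zc4 hk)
      · exact absurd (by linear_combination h2 - h3 + e1 - e2 : (2:ZMod k) = 0) (zc2 hk)
      · exact absurd (by linear_combination h3 - h2 + e2 - e1 : (2:ZMod k) = 0) (zc2 hk)
      · exact absurd (by linear_combination h3 - h2 + e2 - e1 : (4:ZMod k) = 0) (zc4 hk)
      · linear_combination h2 + e1
      · exact absurd (by linear_combination h3 - h2 + e2 - e1 : (2:ZMod k) = 0) (zc2 hk)
  · intro hu
    rcases mem_nbhd.mp hu with h | h | h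
    · rcases hcase with ⟨e1, e2⟩ | ⟨e1, e2⟩
      · left; rw [h, ← e1]; exact ha
      · left; rw [h, ← e2]; exact ha'
    · right; rw [h]; exact hb0
    · rcases hcase with ⟨e1, e2⟩ | ⟨e1, e2⟩
      · left; rw [h, ← e2]; exact ha'
      · left; rw [h, ← e1]; exact ha

lemma biclique_eq_nbhd (hk : 7 ≤ k) {S : Set (ZMod k)}
    (hS : IsBiclique (cycle k) S) : ∃ i, S = nbhd i := by
  obtain ⟨⟨B1, B2, hcbp, hu⟩, hmax⟩ := hS
  obtain ⟨hB1ne, hB2ne, hdisj, h1i, h2i, hcr⟩ := hcbp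
  by_cases htwo1 : ∃ a ∈ B1, ∃ a' ∈ B1, a ≠ a'
  · obtain ⟨a, ha, a', ha', hne⟩ := htwo1
    obtain ⟨i, hi⟩ := two_in_part hk hcr hB2ne ha ha' hne
    exact ⟨i, by rw [← hu]; exact hi⟩
  by_cases htwo2 : ∃ a ∈ B2, ∃ a' ∈ B2, a ≠ a'
  · obtain ⟨a, ha, a', ha', hne⟩ := htwo2
    have hcr' : ∀ p ∈ B2, ∀ q ∈ B1, (cycle k).Adj p q := fun p hp q hq => (hcr q hq p hp).symm
    obtain ⟨i, hi⟩ := two_in_part hk hcr' hB1ne ha ha' hne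
    refine ⟨i, ?_⟩
    rw [← hu, Set.union_comm]
    exact hi
  · push_neg at htwo1 htwo2
    obtain ⟨α, hα⟩ := hB1ne
    obtain ⟨β, hβ⟩ := hB2ne
    have hads := (cycle_adj hk).mp (hcr α hα β hβ)
    have hsubS : S ⊆ nbhd α := by
      rw [← hu]
      rintro u (h | h)
      · rw [htwo1 u h α hα]
        exact mem_nbhd.mpr (Or.inr (Or.inl rfl))
      · rw [htwo2 u h β hβ]
        rcases hads with h' | h'
        · exact mem_nbhd.mpr (Or.inr (Or.inr h'))
        · exact mem_nbhd.mpr (Or.inl h')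
    have heq := hmax (nbhd α) (nbhd_cbs hk α) hsubS
    exfalso
    have hm : α - 1 ∈ B1 ∪ B2 := by
      rw [hu, heq]; exact mem_nbhd.mpr (Or.inl rfl)
    have hp : α + 1 ∈ B1 ∪ B2 := by
      rw [hu, heq]; exact mem_nbhd.mpr (Or.inr (Or.inr rfl))
    have hm' : α - 1 = β := by
      rcases hm with h | h
      · exact absurd (htwo1 _ h α hα) (fun hh => zc1 hk (by linear_combination -hh))
      · exact htwo2 _ h β hβ
    have hp' : α + 1 = β := by
      rcases hp with h | h
      · exact absurd (htwo1 _ h α hα) (fun hh => zc1 hk (by linear_combination hh))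
      · exact htwo2 _ h β hβ
    exact zc2 hk (by linear_combination hp' - hm')

lemma nbhd_inj (hk : 7 ≤ k) {i j : ZMod k} (h : nbhd i = nbhd j) : i = j := by
  have hi : i ∈ nbhd j := by rw [← h]; exact mem_nbhd.mpr (Or.inr (Or.inl rfl))
  rcases mem_nbhd.mp hi with h' | h' | h'
  · have : j + 1 ∈ nbhd i := by rw [h]; exact mem_nbhd.mpr (Or.inr (Or.inr rfl))
    rcases mem_nbhd.mp this with h'' | h'' | h''
    · exact absurd (by linear_combination h'' + h' : (3:ZMod k) = 0) (zc3 hk)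
    · exact absurd (by linear_combination h'' + h' : (2:ZMod k) = 0) (zc2 hk)
    · exact absurd (by linear_combination h'' + h' : (1:ZMod k) = 0) (zc1 hk)
  · exact h'
  · have : j - 1 ∈ nbhd i := by rw [h]; exact mem_nbhd.mpr (Or.inl rfl)
    rcases mem_nbhd.mp this with h'' | h'' | h''
    · exact absurd (by linear_combination -h'' - h' : (1:ZMod k) = 0) (zc1 hk)
    · exact absurd (by linear_combination -h'' - h' : (2:ZMod k) = 0) (zc2 hk)
    · exact absurd (by linear_combination -h'' - h' : (3:ZMod k) = 0) (zc3 hk)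

lemma nbhd_inter (hk : 7 ≤ k) {i j : ZMod k} (h : (nbhd i ∩ nbhd j).Nonempty) :
    j = i - 2 ∨ j = i - 1 ∨ j = i ∨ j = i + 1 ∨ j = i + 2 := by
  obtain ⟨u, hui, huj⟩ := h
  rcases mem_nbhd.mp hui with h1 | h1 | h1 <;> rcases mem_nbhd.mp huj with h2 | h2 | h2
  · exact Or.inr (Or.inr (Or.inl (by linear_combination h1 - h2)))
  · exact Or.inr (Or.inl (by linear_combination h1 - h2))
  · exact Or.inl (by linear_combination h1 - h2)
  · exact Or.inr (Or.inr (Or.inr (Or.inl (by linear_combination h1 - h2))))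
  · exact Or.inr (Or.inr (Or.inl (by linear_combination h1 - h2)))
  · exact Or.inr (Or.inl (by linear_combination h1 - h2))
  · exact Or.inr (Or.inr (Or.inr (Or.inr (by linear_combination h1 - h2))))
  · exact Or.inr (Or.inr (Or.inr (Or.inl (by linear_combination h1 - h2))))
  · exact Or.inr (Or.inr (Or.inl (by linear_combination h1 - h2)))

lemma nbhd_disj (hk : 7 ≤ k) (i : ZMod k) : nbhd (i - 2) ∩ nbhd (i + 1) = ∅ := by
  rw [Set.eq_empty_iff_forall_notMem]
  rintro u ⟨hu1, hu2⟩
  rcases mem_nbhd.mp hu1 with h1 | h1 | h1 <;> rcases mem_nbhd.mp hu2 with h2 | h2 | h2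
  · exact zc3 hk (by linear_combination h1 - h2)
  · exact zc4 hk (by linear_combination h1 - h2)
  · exact zc5 hk (by linear_combination h1 - h2)
  · exact zc2 hk (by linear_combination h1 - h2)
  · exact zc3 hk (by linear_combination h1 - h2)
  · exact zc4 hk (by linear_combination h1 - h2)
  · exact zc1 hk (by linear_combination h1 - h2)
  · exact zc2 hk (by linear_combination h1 - h2)
  · exact zc3 hk (by linear_combination h1 - h2)

end Cycle

/-- For `k ≥ 7`, deleting any vertex from `KB(C_k)` never yields a biclique graph. -/
theorem stmt_1 (k : ℕ) (hk : 7 ≤ k)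
    (q : {S : Set (ZMod k) // IsBiclique (cycle k) S})
    (W : Type) [Fintype W] (H' : SimpleGraph W) :
    ¬Nonempty (KB H' ≃g SimpleGraph.induce {p | p ≠ q} (KB (cycle k))) := by
  rintro ⟨e⟩
  obtain ⟨i0, hq0⟩ := biclique_eq_nbhd hk q.2
  set vα : {S : Set (ZMod k) // IsBiclique (cycle k) S} :=
    ⟨nbhd (i0 - 2), nbhd_biclique hk _⟩ with hvα
  set vβ : {S : Set (ZMod k) // IsBiclique (cycle k) S} :=
    ⟨nbhd (i0 - 1), nbhd_biclique hk _⟩ with hvβ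
  set vγ : {S : Set (ZMod k) // IsBiclique (cycle k) S} :=
    ⟨nbhd (i0 + 1), nbhd_biclique hk _⟩ with hvγ
  have hαβ : nbhd (i0 - 2) ≠ nbhd (i0 - 1) :=
    fun h => zc1 hk (by linear_combination - nbhd_inj hk h)
  have hβγ : nbhd (i0 - 1) ≠ nbhd (i0 + 1) :=
    fun h => zc2 hk (by linear_combination - nbhd_inj hk h)
  have hαγ : nbhd (i0 - 2) ≠ nbhd (i0 + 1) :=
    fun h => zc3 hk (by linear_combination - nbhd_inj hk h)
  have hαq : vα ≠ q := by
    intro h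
    have : nbhd (i0 - 2) = nbhd i0 := by
      rw [← hq0]; exact congrArg Subtype.val h
    exact zc2 hk (by linear_combination - nbhd_inj hk this)
  have hβq : vβ ≠ q := by
    intro h
    have : nbhd (i0 - 1) = nbhd i0 := by
      rw [← hq0]; exact congrArg Subtype.val h
    exact zc1 hk (by linear_combination - nbhd_inj hk this)
  have hγq : vγ ≠ q := by
    intro h
    have : nbhd (i0 + 1) = nbhd i0 := by
      rw [← hq0]; exact congrArg Subtype.val h
    exact zc1 hk (by linear_combination nbhd_inj hk this)
  set α' : {p : {S : Set (ZMod k) // IsBiclique (cycle k) S} // p ∈ {p | p ≠ q}} := ⟨vα, hαq⟩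
  set β' : {p : {S : Set (ZMod k) // IsBiclique (cycle k) S} // p ∈ {p | p ≠ q}} := ⟨vβ, hβq⟩
  set γ' : {p : {S : Set (ZMod k) // IsBiclique (cycle k) S} // p ∈ {p | p ≠ q}} := ⟨vγ, hγq⟩
  set A' := e.symm α' with hA'
  set B' := e.symm β' with hB'
  set C' := e.symm γ' with hC'
  -- adjacency of A' B'
  have hadjαβ : (KB (cycle k)).Adj vα vβ := by
    refine (SimpleGraph.fromRel_adj _ _ _).mpr ⟨fun h => hαβ (congrArg Subtype.val h), Or.inl ⟨i0 - 2, ?_, ?_⟩⟩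
    · exact mem_nbhd.mpr (Or.inr (Or.inl rfl))
    · exact mem_nbhd.mpr (Or.inl (by ring))
  have hadjβγ : (KB (cycle k)).Adj vβ vγ := by
    refine (SimpleGraph.fromRel_adj _ _ _).mpr ⟨fun h => hβγ (congrArg Subtype.val h), Or.inl ⟨i0, ?_, ?_⟩⟩
    · exact mem_nbhd.mpr (Or.inr (Or.inr (by ring)))
    · exact mem_nbhd.mpr (Or.inl (by ring))
  have hadjAB : (KB H').Adj A' B' := e.symm.map_rel_iff.mpr (by exact hadjαβ)
  have hadjBC : (KB H').Adj B' C' := e.symm.map_rel_iff.mpr (by exact hadjβγ)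
  obtain ⟨hABne, hABor⟩ := (SimpleGraph.fromRel_adj _ _ _).mp hadjAB
  obtain ⟨hBCne, hBCor⟩ := (SimpleGraph.fromRel_adj _ _ _).mp hadjBC
  have hx : ((A' : {S : Set W // IsBiclique H' S}).1 ∩ B'.1).Nonempty := by
    rcases hABor with h | h
    · exact h
    · rwa [Set.inter_comm] at h
  have hy : (B'.1 ∩ C'.1).Nonempty := by
    rcases hBCor with h | h
    · exact h
    · rwa [Set.inter_comm] at h
  obtain ⟨x, hxA, hxB⟩ := hx
  obtain ⟨y, hyB, hyC⟩ := hy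
  -- A' and C' are disjoint
  have hAC : ∀ u, u ∈ A'.1 → u ∈ C'.1 → False := by
    intro u h1 h2
    have hne : A' ≠ C' := by
      intro h
      have := e.symm.injective h
      have hveq : vα = vγ := congrArg Subtype.val this
      exact hαγ (congrArg Subtype.val hveq)
    have hadjAC : (KB H').Adj A' C' :=
      (SimpleGraph.fromRel_adj _ _ _).mpr ⟨hne, Or.inl ⟨u, h1, h2⟩⟩
    have h3 : (KB (cycle k)).Adj vα vγ := e.symm.map_rel_iff.mp hadjAC
    obtain ⟨-, h4 | h4⟩ := (SimpleGraph.fromRel_adj _ _ _).mp h3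
    · obtain ⟨w, hw1, hw2⟩ := h4
      have := nbhd_disj hk i0
      rw [Set.eq_empty_iff_forall_notMem] at this
      exact this w ⟨hw1, hw2⟩
    · obtain ⟨w, hw1, hw2⟩ := h4
      have := nbhd_disj hk i0
      rw [Set.eq_empty_iff_forall_notMem] at this
      exact this w ⟨hw2, hw1⟩
  have hxC : x ∉ C'.1 := fun h => hAC x hxA h
  -- a neighbor of x inside A'
  obtain ⟨⟨A1, A2, hAcbp, hAu⟩, -⟩ := A'.2
  obtain ⟨a, ha, hax⟩ : ∃ a, a ∈ A'.1 ∧ H'.Adj a x := by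
    have hxA' := hxA
    rw [← hAu] at hxA'
    rcases hxA' with h | h
    · obtain ⟨a2, ha2⟩ := hAcbp.2.1
      refine ⟨a2, by rw [← hAu]; exact Or.inr ha2, (hAcbp.2.2.2.2.2 x h a2 ha2).symm⟩
    · obtain ⟨a1, ha1⟩ := hAcbp.1
      refine ⟨a1, by rw [← hAu]; exact Or.inl ha1, hAcbp.2.2.2.2.2 a1 ha1 x h⟩
  have haC : a ∉ C'.1 := fun h => hAC a ha h
  have hBCval : B'.1 ≠ C'.1 := by
    intro h
    have : B' = C' := Subtype.ext h
    have := e.symm.injective this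
    exact hβγ (congrArg Subtype.val (congrArg Subtype.val this))
  -- the crucial finiteness condition
  refine star_aux B'.2 C'.2 hBCval hyB hyC hxB hxC hax haC ?_
  intro D hD h1 h2
  by_contra hcontra
  push_neg at hcontra
  obtain ⟨hDB, hDC⟩ := hcontra
  set 𝔇 : {S : Set W // IsBiclique H' S} := ⟨D, hD⟩ with h𝔇
  have hadjDB : (KB H').Adj 𝔇 B' :=
    (SimpleGraph.fromRel_adj _ _ _).mpr ⟨fun h => hDB (congrArg Subtype.val h), Or.inl h1⟩
  have hadjDC : (KB H').Adj 𝔇 C' :=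
    (SimpleGraph.fromRel_adj _ _ _).mpr ⟨fun h => hDC (congrArg Subtype.val h), Or.inl h2⟩
  have h5 := e.map_rel_iff.mpr hadjDB
  have h6 := e.map_rel_iff.mpr hadjDC
  rw [hB', e.apply_symm_apply] at h5
  rw [hC', e.apply_symm_apply] at h6
  have h5' : (KB (cycle k)).Adj (e 𝔇).1 vβ := h5
  have h6' : (KB (cycle k)).Adj (e 𝔇).1 vγ := h6
  obtain ⟨j, hj⟩ := biclique_eq_nbhd hk (e 𝔇).1.2
  obtain ⟨hne5, hor5⟩ := (SimpleGraph.fromRel_adj _ _ _).mp h5'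
  obtain ⟨hne6, hor6⟩ := (SimpleGraph.fromRel_adj _ _ _).mp h6'
  have hjβ : j ≠ i0 - 1 := by
    intro h
    apply hne5
    apply Subtype.ext
    rw [hj, h]
  have hjγ : j ≠ i0 + 1 := by
    intro h
    apply hne6
    apply Subtype.ext
    rw [hj, h]
  have hjq : j ≠ i0 := by
    intro h
    have h7 : (e 𝔇).1 ≠ q := (e 𝔇).2
    apply h7
    apply Subtype.ext
    rw [hj, h, hq0]
  have hint5 : (nbhd (i0 - 1) ∩ nbhd j).Nonempty := by
    rcases hor5 with h | h
    · obtain ⟨w, hw1, hw2⟩ := h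
      rw [hj] at hw1
      exact ⟨w, hw2, hw1⟩
    · obtain ⟨w, hw1, hw2⟩ := h
      rw [hj] at hw2
      exact ⟨w, hw1, hw2⟩
  have hint6 : (nbhd (i0 + 1) ∩ nbhd j).Nonempty := by
    rcases hor6 with h | h
    · obtain ⟨w, hw1, hw2⟩ := h
      rw [hj] at hw1
      exact ⟨w, hw2, hw1⟩
    · obtain ⟨w, hw1, hw2⟩ := h
      rw [hj] at hw2
      exact ⟨w, hw1, hw2⟩
  have hj5 : j = i0 - 3 ∨ j = i0 - 2 := by
    rcases nbhd_inter hk hint5 with h | h | h | h | h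
    · exact Or.inl (by linear_combination h)
    · exact Or.inr (by linear_combination h)
    · exact absurd (by linear_combination h : j = i0 - 1) hjβ
    · exact absurd (by linear_combination h : j = i0) hjq
    · exact absurd (by linear_combination h : j = i0 + 1) hjγ
  have hj6 : j = i0 + 2 ∨ j = i0 + 3 := by
    rcases nbhd_inter hk hint6 with h | h | h | h | h
    · exact absurd (by linear_combination h : j = i0 - 1) hjβ
    · exact absurd (by linear_combination h : j = i0) hjq
    · exact absurd (by linear_combination h : j = i0 + 1) hjγ
    · exact Or.inl (by linear_combination h)
    · exact Or.inr (by linear_combination h)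
  rcases hj5 with h | h <;> rcases hj6 with h' | h'
  · exact zc5 hk (by linear_combination h - h')
  · exact zc6 hk (by linear_combination h - h')
  · exact zc4 hk (by linear_combination h - h')
  · exact zc5 hk (by linear_combination h - h')
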